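/- Let A ∈ ℝ^{n×n} and let W = diag(L_{p1},…,L_{pn}) with L_{pi} > 0 for all i. Denote by |A| the matrix with entries |a_{ij}|, and set M̂ = W|A| and Ã = W A. If there exists a symmetric positive definite matrix P ∈ ℝ^{n×n} such that M̂^T P M̂ − P is negative definite, then there exists a diagonal matrix D ∈ ℝ^{n×n} with strictly positive diagonal entries such that Ã^T D Ã − D is negative definite. -/

import Mathlib

open Matrix

/-- Symmetric positive definiteness of a real matrix. -/
def PosDefM {ι : Type*} [Fintype ι] (P : Matrix ι ι ℝ) : Prop :=
  Pᵀ = P ∧ ∀ v : ι → ℝ, v ≠ 0 → 0 < v ⬝ᵥ (P *ᵥ v)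

/-- Negative definiteness of a real matrix. -/
def NegDefM {ι : Type*} [Fintype ι] (Q : Matrix ι ι ℝ) : Prop :=
  ∀ v : ι → ℝ, v ≠ 0 → v ⬝ᵥ (Q *ᵥ v) < 0

/-- Entrywise absolute value of a matrix. -/
def absM {ι κ : Type*} (A : Matrix ι κ ℝ) : Matrix ι κ ℝ :=
  Matrix.of fun i j => |A i j|

namespace HuWangAux

open Finset

variable {n : ℕ}

lemma quad_expand (B P : Matrix (Fin n) (Fin n) ℝ) (v : Fin n → ℝ) :
    v ⬝ᵥ ((Bᵀ * P * B - P) *ᵥ v)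
      = (B *ᵥ v) ⬝ᵥ (P *ᵥ (B *ᵥ v)) - v ⬝ᵥ (P *ᵥ v) := by
  rw [sub_mulVec, dotProduct_sub]
  congr 1
  rw [Matrix.mul_assoc, ← Matrix.mulVec_mulVec, ← Matrix.mulVec_mulVec,
    Matrix.dotProduct_mulVec, Matrix.vecMul_transpose]


lemma quad_smul (P : Matrix (Fin n) (Fin n) ℝ) (c : ℝ) (v : Fin n → ℝ) :
    (c • v) ⬝ᵥ (P *ᵥ (c • v)) = c ^ 2 * (v ⬝ᵥ (P *ᵥ v)) := by
  rw [Matrix.mulVec_smul, smul_dotProduct, dotProduct_smul, smul_eq_mul, smul_eq_mul]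
  ring

lemma quad_cont (P : Matrix (Fin n) (Fin n) ℝ) :
    Continuous fun v : Fin n → ℝ => v ⬝ᵥ (P *ᵥ v) := by
  simp only [dotProduct, Matrix.mulVec]
  exact continuous_finset_sum _ fun i _ =>
    (continuous_apply i).mul (continuous_finset_sum _ fun j _ =>
      (continuous_const.mul (continuous_apply j)))

lemma contraction (hn : 0 < n) (P M : Matrix (Fin n) (Fin n) ℝ)
    (hP : PosDefM P) (hNeg : ∀ v : Fin n → ℝ, v ≠ 0 →
      (M *ᵥ v) ⬝ᵥ (P *ᵥ (M *ᵥ v)) - v ⬝ᵥ (P *ᵥ v) < 0) :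
    ∃ lam Lam r : ℝ, 0 < lam ∧ 0 < Lam ∧ 0 ≤ r ∧ r < 1 ∧
      (∀ v, lam * ‖v‖ ^ 2 ≤ v ⬝ᵥ (P *ᵥ v)) ∧
      (∀ v, v ⬝ᵥ (P *ᵥ v) ≤ Lam * ‖v‖ ^ 2) ∧
      (∀ v, (M *ᵥ v) ⬝ᵥ (P *ᵥ (M *ᵥ v)) ≤ r * (v ⬝ᵥ (P *ᵥ v))) := by
  haveI : Nonempty (Fin n) := ⟨⟨0, hn⟩⟩
  set q : (Fin n → ℝ) → ℝ := fun v => v ⬝ᵥ (P *ᵥ v) with hq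
  set g : (Fin n → ℝ) → ℝ := fun v => (M *ᵥ v) ⬝ᵥ (P *ᵥ (M *ᵥ v)) - q v with hg
  have hqc : Continuous q := quad_cont P
  have hgc : Continuous g := ((quad_cont P).comp
    (by exact (Matrix.mulVecLin M).continuous_of_finiteDimensional)).sub hqc
  set S := Metric.sphere (0 : Fin n → ℝ) 1 with hS
  have hScpt : IsCompact S := isCompact_sphere 0 1
  have hSne : S.Nonempty := by
    refine ⟨Pi.single ⟨0, hn⟩ 1, ?_⟩
    simp [hS, mem_sphere_zero_iff_norm, Pi.norm_single]
  have memS : ∀ v, v ∈ S → v ≠ 0 := by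
    intro v hv h0
    rw [mem_sphere_zero_iff_norm] at hv
    simp [h0] at hv
  -- homogeneity
  have hqhom : ∀ (c : ℝ) v, q (c • v) = c ^ 2 * q v := fun c v => quad_smul P c v
  have hghom : ∀ (c : ℝ) v, g (c • v) = c ^ 2 * g v := by
    intro c v
    simp only [hg, hq, Matrix.mulVec_smul, smul_dotProduct, dotProduct_smul, smul_eq_mul]
    ring
  have scale : ∀ (f : (Fin n → ℝ) → ℝ), (∀ (c : ℝ) v, f (c • v) = c ^ 2 * f v) →
      ∀ (b : ℝ), (∀ v ∈ S, f v ≤ b) → ∀ v, f v ≤ b * ‖v‖ ^ 2 := by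
    intro f hf b hb v
    rcases eq_or_ne v 0 with rfl | hv
    · have : f 0 = 0 := by
        have := hf 0 0; simpa using this
      simp [this]
    · have hu : (‖v‖⁻¹ • v) ∈ S := by
        rw [hS, mem_sphere_zero_iff_norm]
        exact norm_smul_inv_norm (𝕜 := ℝ) hv
      have h1 := hb _ hu
      have h2 : f (‖v‖⁻¹ • v) = (‖v‖ ^ 2)⁻¹ * f v := by
        rw [hf]; congr 1; rw [inv_pow]
      have hvn : (0:ℝ) < ‖v‖ ^ 2 := by
        have := norm_pos_iff.mpr hv; positivity
      rw [h2] at h1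
      calc f v = ‖v‖ ^ 2 * ((‖v‖ ^ 2)⁻¹ * f v) := by field_simp
      _ ≤ ‖v‖ ^ 2 * b := by
          exact mul_le_mul_of_nonneg_left h1 (le_of_lt hvn)
      _ = b * ‖v‖ ^ 2 := mul_comm _ _
  -- min of q on S
  obtain ⟨v0, hv0S, hmin⟩ := hScpt.exists_isMinOn hSne hqc.continuousOn
  set lam := q v0 with hlam
  have hlampos : 0 < lam := hP.2 v0 (memS v0 hv0S)
  have hlow : ∀ v, lam * ‖v‖ ^ 2 ≤ q v := by
    have := scale (fun v => -q v) (by intro c v; simp only [hqhom]; ring) (-lam)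
      (by intro v hv; simpa using hmin hv)
    intro v
    have h := this v
    simp only [neg_mul] at h
    linarith
  -- max of q on S
  obtain ⟨v1, hv1S, hmax⟩ := hScpt.exists_isMaxOn hSne hqc.continuousOn
  set Lam := q v1 with hLam
  have hLampos : 0 < Lam := hP.2 v1 (memS v1 hv1S)
  have hhigh : ∀ v, q v ≤ Lam * ‖v‖ ^ 2 :=
    scale q hqhom Lam (fun v hv => hmax hv)
  -- max of g on S
  obtain ⟨v2, hv2S, hgmax⟩ := hScpt.exists_isMaxOn hSne hgc.continuousOn
  set eps := -(g v2) with heps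
  clear_value lam Lam eps
  have hepspos : 0 < eps := by
    have h := hNeg v2 (memS v2 hv2S)
    have h2 : g v2 < 0 := by simp only [hg, hq]; exact h
    simp only [heps]; linarith
  have hgle : ∀ v, g v ≤ -eps * ‖v‖ ^ 2 :=
    scale g hghom (-eps) (fun v hv => by simpa [heps] using hgmax hv)
  -- eps ≤ Lam
  have hqnonneg : ∀ v, 0 ≤ q v := by
    intro v
    have := hlow v
    nlinarith [norm_nonneg v, sq_nonneg ‖v‖]
  have hepsLam : eps ≤ Lam := by
    have h1 := hgmax (hv2S)
    have h2 : g v2 ≥ -q v2 := by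
      simp only [hg]
      have := hqnonneg (M *ᵥ v2); linarith
    have h3 : q v2 ≤ Lam := by rw [hLam]; exact hmax hv2S
    simp only [heps]; linarith
  refine ⟨lam, Lam, 1 - eps / Lam, hlampos, hLampos, ?_, ?_, hlow, hhigh, ?_⟩
  · have : eps / Lam ≤ 1 := (div_le_one hLampos).2 hepsLam
    linarith
  · have : 0 < eps / Lam := div_pos hepspos hLampos
    linarith
  · intro v
    have h1 : g v ≤ -eps * ‖v‖ ^ 2 := hgle v
    have h2 : q v ≤ Lam * ‖v‖ ^ 2 := hhigh v
    have h3 : eps / Lam * q v ≤ eps * ‖v‖ ^ 2 := by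
      rw [div_mul_eq_mul_div, div_le_iff₀ hLampos]
      calc eps * q v ≤ eps * (Lam * ‖v‖ ^ 2) :=
        mul_le_mul_of_nonneg_left h2 (le_of_lt hepspos)
      _ = eps * ‖v‖ ^ 2 * Lam := by ring
    have : (M *ᵥ v) ⬝ᵥ (P *ᵥ (M *ᵥ v)) = g v + q v := by simp [hg]
    rw [this]
    have : (1 - eps / Lam) * q v = q v - eps / Lam * q v := by ring
    rw [this]
    linarith


lemma pow_quad (P M : Matrix (Fin n) (Fin n) ℝ) (r : ℝ) (hr : 0 ≤ r)
    (h : ∀ v, (M *ᵥ v) ⬝ᵥ (P *ᵥ (M *ᵥ v)) ≤ r * (v ⬝ᵥ (P *ᵥ v))) :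
    ∀ (k : ℕ) (v : Fin n → ℝ),
      ((M ^ k) *ᵥ v) ⬝ᵥ (P *ᵥ ((M ^ k) *ᵥ v)) ≤ r ^ k * (v ⬝ᵥ (P *ᵥ v)) := by
  intro k
  induction k with
  | zero => intro v; simp [Matrix.one_mulVec]
  | succ k ih =>
    intro v
    have h1 : (M ^ (k + 1)) *ᵥ v = (M ^ k) *ᵥ (M *ᵥ v) := by
      rw [Matrix.mulVec_mulVec, pow_succ]
    rw [h1]
    calc ((M ^ k) *ᵥ (M *ᵥ v)) ⬝ᵥ (P *ᵥ ((M ^ k) *ᵥ (M *ᵥ v)))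
        ≤ r ^ k * ((M *ᵥ v) ⬝ᵥ (P *ᵥ (M *ᵥ v))) := ih (M *ᵥ v)
      _ ≤ r ^ k * (r * (v ⬝ᵥ (P *ᵥ v))) :=
          mul_le_mul_of_nonneg_left (h v) (pow_nonneg hr k)
      _ = r ^ (k + 1) * (v ⬝ᵥ (P *ᵥ v)) := by rw [pow_succ]; ring

lemma small_entries (P M : Matrix (Fin n) (Fin n) ℝ)
    (lam Lam r : ℝ) (hlam : 0 < lam) (hLam : 0 < Lam) (hr0 : 0 ≤ r) (hr1 : r < 1)
    (hlow : ∀ v, lam * ‖v‖ ^ 2 ≤ v ⬝ᵥ (P *ᵥ v))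
    (hhigh : ∀ v, v ⬝ᵥ (P *ᵥ v) ≤ Lam * ‖v‖ ^ 2)
    (hcon : ∀ v, (M *ᵥ v) ⬝ᵥ (P *ᵥ (M *ᵥ v)) ≤ r * (v ⬝ᵥ (P *ᵥ v)))
    (δ : ℝ) (hδ : 0 < δ) :
    ∃ N : ℕ, 0 < N ∧ ∀ i j, |(M ^ N) i j| < δ := by
  obtain ⟨N0, hN0⟩ := exists_pow_lt_of_lt_one (x := lam * δ ^ 2 / Lam) (by positivity) hr1
  refine ⟨N0 + 1, Nat.succ_pos N0, fun i j => ?_⟩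
  have hrN : r ^ (N0 + 1) < lam * δ ^ 2 / Lam := by
    calc r ^ (N0 + 1) = r ^ N0 * r := pow_succ r N0
    _ ≤ r ^ N0 * 1 := mul_le_mul_of_nonneg_left (le_of_lt hr1) (pow_nonneg hr0 N0)
    _ = r ^ N0 := mul_one _
    _ < _ := hN0
  set w := (M ^ (N0 + 1)) *ᵥ Pi.single j 1 with hw
  have hentry : (M ^ (N0 + 1)) i j = w i := by
    simp [hw, Matrix.mulVec_single]
  have h1 : |w i| ≤ ‖w‖ := by
    rw [← Real.norm_eq_abs]; exact norm_le_pi_norm w i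
  have h2 : lam * ‖w‖ ^ 2 ≤ r ^ (N0 + 1) * (Pi.single j 1 ⬝ᵥ (P *ᵥ Pi.single j 1)) :=
    le_trans (hlow w) (pow_quad P M r hr0 hcon (N0 + 1) _)
  have h3 : Pi.single j 1 ⬝ᵥ (P *ᵥ Pi.single j 1) ≤ Lam := by
    have := hhigh (Pi.single j (1:ℝ))
    rwa [Pi.norm_single, norm_one, one_pow, mul_one] at this
  have h4 : lam * ‖w‖ ^ 2 ≤ r ^ (N0 + 1) * Lam :=
    le_trans h2 (mul_le_mul_of_nonneg_left h3 (pow_nonneg hr0 _))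
  have h5 : ‖w‖ ^ 2 < δ ^ 2 := by
    have h6 : r ^ (N0 + 1) * Lam < lam * δ ^ 2 := (lt_div_iff₀ hLam).1 hrN
    nlinarith
  rw [hentry]
  have : |w i| ^ 2 < δ ^ 2 := lt_of_le_of_lt (by
    have : |w i| ≤ ‖w‖ := h1
    nlinarith [abs_nonneg (w i), norm_nonneg w]) h5
  exact lt_of_pow_lt_pow_left₀ 2 (le_of_lt hδ) this

lemma pow_entries_nonneg (M : Matrix (Fin n) (Fin n) ℝ) (hM : ∀ i j, 0 ≤ M i j) :
    ∀ (k : ℕ) (i j), 0 ≤ (M ^ k) i j := by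
  intro k
  induction k with
  | zero => intro i j; simp [Matrix.one_apply]; split <;> norm_num
  | succ k ih =>
    intro i j
    rw [pow_succ, Matrix.mul_apply]
    exact sum_nonneg fun l _ => mul_nonneg (ih i l) (hM l j)

lemma build_x (M : Matrix (Fin n) (Fin n) ℝ) (hM : ∀ i j, 0 ≤ M i j)
    (N : ℕ) (hN : 0 < N)
    (hsmall : ∀ i, ((M ^ N) *ᵥ (fun _ => (1:ℝ))) i < 1) :
    ∃ x : Fin n → ℝ, (∀ i, 0 < x i) ∧ (∀ i, (M *ᵥ x) i < x i) := by
  set one : Fin n → ℝ := fun _ => 1 with hone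
  set x : Fin n → ℝ := ∑ k ∈ Finset.range N, (M ^ k) *ᵥ one with hx
  have hterm_nonneg : ∀ (k : ℕ) (i : Fin n), 0 ≤ ((M ^ k) *ᵥ one) i := by
    intro k i
    simp only [Matrix.mulVec, dotProduct, hone, mul_one]
    exact sum_nonneg fun j _ => pow_entries_nonneg M hM k i j
  have hxapp : ∀ i, x i = ∑ k ∈ Finset.range N, ((M ^ k) *ᵥ one) i := by
    intro i; rw [hx]; exact Finset.sum_apply i _ _
  have hxpos : ∀ i, 0 < x i := by
    intro i
    rw [hxapp]
    have h0 : ((M ^ 0) *ᵥ one) i = 1 := by simp [Matrix.one_mulVec, hone]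
    have hle : ((M ^ 0) *ᵥ one) i ≤ ∑ k ∈ Finset.range N, ((M ^ k) *ᵥ one) i :=
      Finset.single_le_sum (f := fun k => ((M ^ k) *ᵥ one) i)
        (fun k _ => hterm_nonneg k i) (Finset.mem_range.2 hN)
    rw [h0] at hle
    linarith
  refine ⟨x, hxpos, fun i => ?_⟩
  have hMx : M *ᵥ x = ∑ k ∈ Finset.range N, (M ^ (k + 1)) *ᵥ one := by
    rw [hx, show M *ᵥ (∑ k ∈ Finset.range N, (M ^ k) *ᵥ one)
        = M.mulVecLin (∑ k ∈ Finset.range N, (M ^ k) *ᵥ one) from rfl, map_sum]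
    refine Finset.sum_congr rfl fun k _ => ?_
    rw [Matrix.mulVecLin_apply, Matrix.mulVec_mulVec, ← pow_succ']
  have htel : ∑ k ∈ Finset.range N, (M ^ (k + 1)) *ᵥ one
      = x + (M ^ N) *ᵥ one - one := by
    have h1 : ∑ k ∈ Finset.range (N + 1), (M ^ k) *ᵥ one
        = (∑ k ∈ Finset.range N, (M ^ (k + 1)) *ᵥ one) + (M ^ 0) *ᵥ one :=
      Finset.sum_range_succ' _ N
    have h2 : ∑ k ∈ Finset.range (N + 1), (M ^ k) *ᵥ one
        = x + (M ^ N) *ᵥ one := by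
      rw [hx, Finset.sum_range_succ]
    have h3 : (M ^ 0) *ᵥ one = one := by simp [Matrix.one_mulVec]
    rw [h3] at h1
    rw [h2] at h1
    exact eq_sub_of_add_eq h1.symm
  rw [hMx, htel]
  have := hsmall i
  simp only [Pi.add_apply, Pi.sub_apply, hone]
  linarith


lemma diag_lyap (M : Matrix (Fin n) (Fin n) ℝ) (hM : ∀ i j, 0 ≤ M i j)
    (x y : Fin n → ℝ) (hx : ∀ i, 0 < x i) (hy : ∀ i, 0 < y i)
    (hMx : ∀ i, (M *ᵥ x) i ≤ x i) (hMy : ∀ j, (Mᵀ *ᵥ y) j < y j) :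
    ∀ v : Fin n → ℝ, v ≠ 0 →
      ∑ i, (y i / x i) * ((M *ᵥ v) i) ^ 2 < ∑ i, (y i / x i) * (v i) ^ 2 := by
  intro v hv
  have hmulVec : ∀ (w : Fin n → ℝ) i, (M *ᵥ w) i = ∑ j, M i j * w j := by
    intro w i; rfl
  -- Cauchy-Schwarz per row
  have hCS : ∀ i, ((M *ᵥ v) i) ^ 2 ≤ (M *ᵥ x) i * ∑ j, M i j * (v j) ^ 2 / x j := by
    intro i
    rw [hmulVec v i, hmulVec x i]
    exact Finset.sum_sq_le_sum_mul_sum_of_sq_eq_mul Finset.univ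
      (f := fun j => M i j * x j) (g := fun j => M i j * (v j) ^ 2 / x j)
      (r := fun j => M i j * v j)
      (fun j _ => mul_nonneg (hM i j) (le_of_lt (hx j)))
      (fun j _ => div_nonneg (mul_nonneg (hM i j) (sq_nonneg _)) (le_of_lt (hx j)))
      (fun j _ => by
        have hxj := (hx j).ne'
        field_simp)
  have hSnn : ∀ i, 0 ≤ ∑ j, M i j * (v j) ^ 2 / x j := fun i =>
    sum_nonneg fun j _ => div_nonneg (mul_nonneg (hM i j) (sq_nonneg _)) (le_of_lt (hx j))
  have step2 : ∑ i, (y i / x i) * ((M *ᵥ v) i) ^ 2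
      ≤ ∑ i, y i * ∑ j, M i j * (v j) ^ 2 / x j := by
    refine Finset.sum_le_sum fun i _ => ?_
    have hdi : 0 ≤ y i / x i := div_nonneg (le_of_lt (hy i)) (le_of_lt (hx i))
    calc (y i / x i) * ((M *ᵥ v) i) ^ 2
        ≤ (y i / x i) * ((M *ᵥ x) i * ∑ j, M i j * (v j) ^ 2 / x j) :=
          mul_le_mul_of_nonneg_left (hCS i) hdi
      _ ≤ (y i / x i) * (x i * ∑ j, M i j * (v j) ^ 2 / x j) := by
          refine mul_le_mul_of_nonneg_left ?_ hdi
          exact mul_le_mul_of_nonneg_right (hMx i) (hSnn i)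
      _ = y i * ∑ j, M i j * (v j) ^ 2 / x j := by
          have hxi := (hx i).ne'
          field_simp
  have step3 : ∑ i, y i * ∑ j, M i j * (v j) ^ 2 / x j
      = ∑ j, ((v j) ^ 2 / x j) * (Mᵀ *ᵥ y) j := by
    simp only [Finset.mul_sum]
    rw [Finset.sum_comm]
    refine Finset.sum_congr rfl fun j _ => ?_
    have hMt : (Mᵀ *ᵥ y) j = ∑ i, M i j * y i := by
      simp [Matrix.mulVec, dotProduct, Matrix.transpose_apply]
    rw [hMt, Finset.mul_sum]
    exact Finset.sum_congr rfl fun i _ => by ring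
  obtain ⟨j0, hj0⟩ : ∃ j0, v j0 ≠ 0 := Function.ne_iff.1 hv
  have step4 : ∑ j, ((v j) ^ 2 / x j) * (Mᵀ *ᵥ y) j
      < ∑ j, ((v j) ^ 2 / x j) * y j := by
    refine Finset.sum_lt_sum (fun j _ => ?_) ⟨j0, Finset.mem_univ j0, ?_⟩
    · exact mul_le_mul_of_nonneg_left (le_of_lt (hMy j))
        (div_nonneg (sq_nonneg _) (le_of_lt (hx j)))
    · have hpos : 0 < (v j0) ^ 2 / x j0 :=
        div_pos (by positivity) (hx j0)
      exact mul_lt_mul_of_pos_left (hMy j0) hpos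
  have step5 : ∑ j, ((v j) ^ 2 / x j) * y j = ∑ j, (y j / x j) * (v j) ^ 2 :=
    Finset.sum_congr rfl fun j _ => by ring
  calc ∑ i, (y i / x i) * ((M *ᵥ v) i) ^ 2
      ≤ ∑ i, y i * ∑ j, M i j * (v j) ^ 2 / x j := step2
    _ = ∑ j, ((v j) ^ 2 / x j) * (Mᵀ *ᵥ y) j := step3
    _ < ∑ j, ((v j) ^ 2 / x j) * y j := step4
    _ = ∑ j, (y j / x j) * (v j) ^ 2 := step5

end HuWangAux

open HuWangAux in
/-- **Hu–Wang comparison (Proposition 8 of the paper).** If the Lyapunov inequality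
`M̂ᵀ P M̂ - P ≺ 0` holds for some symmetric positive definite `P`, where `M̂ = W |A|`
and `W = diag(L_{p1},…,L_{pn})` with `L_{pi} > 0`, then there is a diagonal matrix `D`
with strictly positive diagonal entries such that `Ãᵀ D Ã - D ≺ 0`, `Ã = W A`. -/
theorem huwang_condition_implies_structured_lyapunov
    (n : ℕ) (A : Matrix (Fin n) (Fin n) ℝ) (Lp : Fin n → ℝ) (hLp : ∀ i, 0 < Lp i)
    (P : Matrix (Fin n) (Fin n) ℝ)
    (hP : PosDefM P)
    (hNeg : NegDefM ((Matrix.diagonal Lp * absM A)ᵀ * P * (Matrix.diagonal Lp * absM A) - P)) :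
    ∃ d : Fin n → ℝ, (∀ i, 0 < d i) ∧
      NegDefM ((Matrix.diagonal Lp * A)ᵀ * Matrix.diagonal d * (Matrix.diagonal Lp * A)
        - Matrix.diagonal d) := by
  rcases Nat.eq_zero_or_pos n with hn | hn
  · subst hn
    exact ⟨fun _ => 1, fun i => one_pos,
      fun v hv => absurd (funext fun i => i.elim0) hv⟩
  · set Mhat := Matrix.diagonal Lp * absM A with hMhat
    set Ahat := Matrix.diagonal Lp * A with hAhat
    have hMnn : ∀ i j, 0 ≤ Mhat i j := by
      intro i j
      rw [hMhat, Matrix.diagonal_mul]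
      exact mul_nonneg (le_of_lt (hLp i)) (abs_nonneg _)
    have habs : ∀ i j, |Ahat i j| = Mhat i j := by
      intro i j
      rw [hAhat, hMhat, Matrix.diagonal_mul, Matrix.diagonal_mul, abs_mul,
        abs_of_pos (hLp i)]
      rfl
    have hNeg' : ∀ v : Fin n → ℝ, v ≠ 0 →
        (Mhat *ᵥ v) ⬝ᵥ (P *ᵥ (Mhat *ᵥ v)) - v ⬝ᵥ (P *ᵥ v) < 0 := by
      intro v hv
      have h := hNeg v hv
      rwa [quad_expand] at h
    obtain ⟨lam, Lam, r, hlam, hLam, hr0, hr1, hlow, hhigh, hcon⟩ :=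
      contraction hn P Mhat hP hNeg'
    have hnR : (0:ℝ) < n := by exact_mod_cast hn
    obtain ⟨N, hNpos, hsmallE⟩ := small_entries P Mhat lam Lam r hlam hLam hr0 hr1
      hlow hhigh hcon (1 / n) (by positivity)
    haveI : Nonempty (Fin n) := ⟨⟨0, hn⟩⟩
    have hsum1n : ∑ _j : Fin n, (1 / n : ℝ) = 1 := by
      rw [Finset.sum_const, Finset.card_univ, Fintype.card_fin, nsmul_eq_mul]
      field_simp
    have hrow : ∀ i, ((Mhat ^ N) *ᵥ fun _ => (1:ℝ)) i < 1 := by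
      intro i
      have h1 : ((Mhat ^ N) *ᵥ fun _ => (1:ℝ)) i = ∑ j, (Mhat ^ N) i j := by
        simp [Matrix.mulVec, dotProduct]
      rw [h1, ← hsum1n]
      refine Finset.sum_lt_sum_of_nonempty Finset.univ_nonempty fun j _ => ?_
      exact lt_of_le_of_lt (le_abs_self _) (hsmallE i j)
    have hcol : ∀ i, ((Mhatᵀ ^ N) *ᵥ fun _ => (1:ℝ)) i < 1 := by
      intro i
      have h1 : ((Mhatᵀ ^ N) *ᵥ fun _ => (1:ℝ)) i = ∑ j, (Mhat ^ N) j i := by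
        rw [← Matrix.transpose_pow]
        simp [Matrix.mulVec, dotProduct, Matrix.transpose_apply]
      rw [h1, ← hsum1n]
      refine Finset.sum_lt_sum_of_nonempty Finset.univ_nonempty fun j _ => ?_
      exact lt_of_le_of_lt (le_abs_self _) (hsmallE j i)
    obtain ⟨x, hxpos, hxlt⟩ := build_x Mhat hMnn N hNpos hrow
    obtain ⟨y, hypos, hylt⟩ := build_x Mhatᵀ (fun i j => hMnn j i) N hNpos hcol
    refine ⟨fun i => y i / x i, fun i => div_pos (hypos i) (hxpos i), ?_⟩
    intro v hv
    rw [quad_expand]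
    set w : Fin n → ℝ := fun i => |v i| with hw
    have hw0 : w ≠ 0 := by
      intro h
      apply hv
      funext i
      have h2 := congrFun h i
      simpa [hw, abs_eq_zero] using h2
    have key := diag_lyap Mhat hMnn x y hxpos hypos
      (fun i => le_of_lt (hxlt i)) hylt w hw0
    have hquadD : ∀ u : Fin n → ℝ,
        u ⬝ᵥ (Matrix.diagonal (fun i => y i / x i) *ᵥ u)
          = ∑ i, (y i / x i) * (u i) ^ 2 := by
      intro u
      simp only [dotProduct, Matrix.mulVec_diagonal]
      exact Finset.sum_congr rfl fun i _ => by ring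
    rw [hquadD, hquadD]
    have hAbnd : ∀ i, ((Ahat *ᵥ v) i) ^ 2 ≤ ((Mhat *ᵥ w) i) ^ 2 := by
      intro i
      have h1 : |(Ahat *ᵥ v) i| ≤ (Mhat *ᵥ w) i := by
        calc |(Ahat *ᵥ v) i| = |∑ j, Ahat i j * v j| := rfl
          _ ≤ ∑ j, |Ahat i j * v j| := Finset.abs_sum_le_sum_abs _ _
          _ = ∑ j, Mhat i j * w j := by
              refine Finset.sum_congr rfl fun j _ => ?_
              rw [abs_mul, habs]
          _ = (Mhat *ᵥ w) i := rfl
      calc ((Ahat *ᵥ v) i) ^ 2 = |(Ahat *ᵥ v) i| ^ 2 := (sq_abs _).symm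
        _ ≤ ((Mhat *ᵥ w) i) ^ 2 := pow_le_pow_left₀ (abs_nonneg _) h1 2
    have hsum1 : ∑ i, (y i / x i) * ((Ahat *ᵥ v) i) ^ 2
        ≤ ∑ i, (y i / x i) * ((Mhat *ᵥ w) i) ^ 2 :=
      Finset.sum_le_sum fun i _ => mul_le_mul_of_nonneg_left (hAbnd i)
        (div_nonneg (hypos i).le (hxpos i).le)
    have hsum2 : ∑ i, (y i / x i) * (w i) ^ 2 = ∑ i, (y i / x i) * (v i) ^ 2 :=
      Finset.sum_congr rfl fun i _ => by rw [hw]; simp [sq_abs]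
    linarith [key]
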